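/- Let q be a prime power and r ≥ 2 an integer. Let (C^{(h)})_{h∈[r]} be finite based cochain complexes over F_q of dimension 2, and let ζ : (C^{(1)})^1 × ⋯ × (C^{(r)})^1 → F_q be a multilinear form of locality w^ζ ≥ 1 that is coboundary-invariant on some H' = (H'_h ⊆ H^1(C^{(h)}))_{h∈[r]} (with B_h = B^1(C^{(h)}) and Z_h = Z^1(C^{(h)})). Then there exist finite based cochain complexes (C̃^{(h)})_{h∈[r]} of dimension 2 over F_q and a multilinear form ζ̃ : (C̃^{(1)})^1 × ⋯ × (C̃^{(r)})^1 → F_q that is coboundary-invariant on some H̃' = (H̃'_h ⊆ H^1(C̃^{(h)}))_{h∈[r]}, such that for every h ∈ [r]: dim (C̃^{(h)})^1 = w^ζ · dim (C^{(h)})^1; dim H^1(C̃^{(h)}) = dim H^1(C^{(h)}); d^1(C̃^{(h)}) = w^ζ · d^1(C^{(h)}); d_1(C̃^{(h)}) ≥ d_1(C^{(h)}); the locality of C̃^{(h)} is at most max{w^ζ · w^{C^{(h)}}, w^{C^{(h)}} + 2}; ζ̃ has locality 1; and subrank(ζ̃_{H̃'}) = subrank(ζ_{H'}). -/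

import Mathlib

open scoped BigOperators
open Matrix

/-- A finite based cochain complex of dimension 2 over `F`: finite basis sets
`b0, b1, b2`, cochain spaces `bᵢ → F`, and coboundary maps `d0, d1` with `d1 ∘ d0 = 0`. -/
structure BCC2 (F : Type) [Field F] : Type 1 where
  b0 : Type
  b1 : Type
  b2 : Type
  [fin0 : Fintype b0]
  [fin1 : Fintype b1]
  [fin2 : Fintype b2]
  [dec0 : DecidableEq b0]
  [dec1 : DecidableEq b1]
  [dec2 : DecidableEq b2]
  d0 : (b0 → F) →ₗ[F] (b1 → F)
  d1 : (b1 → F) →ₗ[F] (b2 → F)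
  dd : ∀ f, d1 (d0 f) = 0

attribute [instance] BCC2.fin0 BCC2.fin1 BCC2.fin2 BCC2.dec0 BCC2.dec1 BCC2.dec2

variable {F : Type} [Field F]

/-- The matrix of a linear map between function spaces in the standard bases. -/
noncomputable def tmat {α β : Type} [DecidableEq α] (L : (α → F) →ₗ[F] (β → F)) :
    Matrix β α F := fun b a => L (Pi.single a 1) b

/-- The locality of a linear map between based spaces: the maximum number of nonzero
entries in a row or column of its matrix. -/
noncomputable def mapLoc {α β : Type} [Fintype α] [Fintype β] [DecidableEq α]
    (L : (α → F) →ₗ[F] (β → F)) : ℕ :=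
  max (Finset.univ.sup fun a : α => Nat.card {b : β | L (Pi.single a 1) b ≠ 0})
    (Finset.univ.sup fun b : β => Nat.card {a : α | L (Pi.single a 1) b ≠ 0})

namespace BCC2

/-- The locality `w^C` of the based complex `C`. -/
noncomputable def loc (C : BCC2 F) : ℕ := max (mapLoc C.d0) (mapLoc C.d1)

/-- The dimension of the first cohomology `H^1(C) = ker d1 / im d0`. -/
noncomputable def h1dim (C : BCC2 F) : ℕ :=
  Module.finrank F (LinearMap.ker C.d1) - Module.finrank F (LinearMap.range C.d0)

/-- The 1-cosystolic distance `d^1(C)`: the minimum Hamming weight of an element of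
`Z^1 \ B^1` (equal to `⊤` if this set is empty). -/
noncomputable def dcosys1 (C : BCC2 F) : ℕ∞ :=
  sInf ((fun x : C.b1 → F => Set.encard {u | x u ≠ 0}) ''
    {x | C.d1 x = 0 ∧ x ∉ LinearMap.range C.d0})

/-- The 1-systolic distance `d_1(C)`: the minimum Hamming weight of an `x ∈ F^{C(1)}` with
`δ₀ᵀ x = 0` and `x ∉ im (δ₁ᵀ)` (equal to `⊤` if this set is empty). -/
noncomputable def dsys1 (C : BCC2 F) : ℕ∞ :=
  sInf ((fun x : C.b1 → F => Set.encard {u | x u ≠ 0}) ''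
    {x | (tmat C.d0)ᵀ.mulVec x = 0 ∧
      x ∉ Set.range fun y : C.b2 → F => (tmat C.d1)ᵀ.mulVec y})

end BCC2

/-- The locality `w^ζ` of a multilinear form on the level-1 cochain spaces of the complexes
`Cs h`: the maximum, over `h` and a basis element `u` of `(Cs h).b1`, of the number of
`r`-tuples of basis elements whose `h`-th coordinate is `u` and on which `ζ` is nonzero. -/
noncomputable def zloc {r : ℕ} (Cs : Fin r → BCC2 F)
    (ζ : MultilinearMap F (fun h => (Cs h).b1 → F) F) : ℕ :=
  Finset.univ.sup fun h : Fin r => Finset.univ.sup fun u : (Cs h).b1 =>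
    Nat.card {uu : ∀ h', (Cs h').b1 //
      uu h = u ∧ ζ (fun h' => Pi.single (uu h') 1) ≠ 0}

/-- `ζ` is coboundary-invariant on the tuple of cohomology subspaces represented by the
intermediate subspaces `W h` (with `B^1 = range d0 ≤ W h ≤ Z^1 = ker d1`). -/
def CobInv {r : ℕ} (Cs : Fin r → BCC2 F)
    (ζ : MultilinearMap F (fun h => (Cs h).b1 → F) F)
    (W : ∀ h, Submodule F ((Cs h).b1 → F)) : Prop :=
  ∀ z b : ∀ h, (Cs h).b1 → F, (∀ h, z h ∈ W h) →
    (∀ h, b h ∈ LinearMap.range (Cs h).d0) →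
    ζ (fun h => z h + b h) = ζ z

/-- The induced form on the cohomology subspaces represented by `W` has subrank at least
`s`. -/
def SubrankGE {r : ℕ} (Cs : Fin r → BCC2 F)
    (ζ : MultilinearMap F (fun h => (Cs h).b1 → F) F)
    (W : ∀ h, Submodule F ((Cs h).b1 → F)) (s : ℕ) (hr : 0 < r) : Prop :=
  ∃ v : ∀ h, Fin s → ((Cs h).b1 → F), (∀ h j, v h j ∈ W h) ∧
    ∀ jj : Fin r → Fin s,
      ζ (fun h => v h (jj h)) = if ∀ h, jj h = jj ⟨0, hr⟩ then 1 else 0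

section Aux

variable {F : Type} [Field F]

/-- pair a linear map into a Sum-indexed function space -/
def sumElimL {X : Type} [AddCommMonoid X] [Module F X] {β γ : Type}
    (f : X →ₗ[F] (β → F)) (g : X →ₗ[F] (γ → F)) : X →ₗ[F] (β ⊕ γ → F) where
  toFun x := Sum.elim (f x) (g x)
  map_add' x y := by funext s; cases s <;> simp
  map_smul' c x := by funext s; cases s <;> simp

@[simp] lemma sumElimL_inl {X : Type} [AddCommMonoid X] [Module F X] {β γ : Type}
    (f : X →ₗ[F] (β → F)) (g : X →ₗ[F] (γ → F)) (x : X) (b : β) :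
    sumElimL f g x (Sum.inl b) = f x b := rfl

@[simp] lemma sumElimL_inr {X : Type} [AddCommMonoid X] [Module F X] {β γ : Type}
    (f : X →ₗ[F] (β → F)) (g : X →ₗ[F] (γ → F)) (x : X) (c : γ) :
    sumElimL f g x (Sum.inr c) = g x c := rfl

/-- the diagonal embedding -/
noncomputable def diagL (α : Type) (w : ℕ) : (α → F) →ₗ[F] (α × Fin w → F) :=
  LinearMap.funLeft F F Prod.fst

@[simp] lemma diagL_apply {α : Type} {w : ℕ} (x : α → F) (p : α × Fin w) :
    diagL α w x p = x p.1 := rfl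

lemma diagL_inj {α : Type} {w : ℕ} [NeZero w] :
    Function.Injective (diagL (F := F) α w) := by
  intro x y h
  funext u
  have := congrFun h (u, 0)
  simpa using this

/-- projection onto 0-th copy -/
noncomputable def proj0L (α : Type) (w : ℕ) [NeZero w] : (α × Fin w → F) →ₗ[F] (α → F) :=
  LinearMap.funLeft F F (fun u => (u, (0 : Fin w)))

@[simp] lemma proj0L_apply {α : Type} {w : ℕ} [NeZero w] (y : α × Fin w → F) (u : α) :
    proj0L α w y u = y (u, 0) := rfl

/-- cyclic difference -/
noncomputable def cdiffL (α : Type) (w : ℕ) [NeZero w] :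
    (α × Fin w → F) →ₗ[F] (α × Fin w → F) :=
  LinearMap.id - LinearMap.funLeft F F (fun p : α × Fin w => (p.1, p.2 + 1))

@[simp] lemma cdiffL_apply {α : Type} {w : ℕ} [NeZero w] (y : α × Fin w → F)
    (p : α × Fin w) : cdiffL α w y p = y p - y (p.1, p.2 + 1) := rfl

/-- The amplified complex. -/
noncomputable def BCC2.tilde (C : BCC2 F) (w : ℕ) [NeZero w] : BCC2 F where
  b0 := C.b0
  b1 := C.b1 × Fin w
  b2 := C.b2 ⊕ (C.b1 × Fin w)
  d0 := (diagL C.b1 w).comp C.d0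
  d1 := sumElimL (C.d1.comp (proj0L C.b1 w)) (cdiffL C.b1 w)
  dd := by
    intro f
    funext s
    cases s with
    | inl c =>
      simp only [sumElimL_inl, LinearMap.comp_apply]
      have : proj0L (F := F) C.b1 w (diagL C.b1 w (C.d0 f)) = C.d0 f := by
        funext u; simp
      rw [this, C.dd]; rfl
    | inr p =>
      simp

end Aux
section Aux2
variable {F : Type} [Field F]

open Fin.NatCast in
omit [Field F] in
lemma cyclic_const {w : ℕ} [NeZero w] {f : Fin w → F} (h : ∀ i, f i = f (i + 1)) :
    ∀ i, f i = f 0 := by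
  have key : ∀ n : ℕ, f ((n : Fin w)) = f 0 := by
    intro n
    induction n with
    | zero => simp
    | succ k ih =>
      have : ((k + 1 : ℕ) : Fin w) = (k : Fin w) + 1 := by push_cast; abel
      rw [this, ← h, ih]
  intro i
  have := key i.val
  rwa [Fin.cast_val_eq_self] at this

lemma tilde_ker_d1 (C : BCC2 F) (w : ℕ) [NeZero w] :
    LinearMap.ker (C.tilde w).d1 =
      Submodule.map (diagL C.b1 w) (LinearMap.ker C.d1) := by
  ext y
  constructor
  · intro hy
    rw [LinearMap.mem_ker] at hy
    have hdiff : ∀ p : C.b1 × Fin w, y p - y (p.1, p.2 + 1) = 0 := by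
      intro p
      have := congrFun hy (Sum.inr p)
      exact this
    have hconst : ∀ u i, y (u, i) = y (u, 0) := by
      intro u i
      exact cyclic_const (f := fun i => y (u, i))
        (fun i => by have := hdiff (u, i); simpa [sub_eq_zero] using this) i
    refine ⟨fun u => y (u, 0), ?_, ?_⟩
    · simp only [SetLike.mem_coe, LinearMap.mem_ker]
      have := congrFun hy
      funext c
      have h2 := congrFun hy (Sum.inl c)
      exact h2
    · funext p
      simp [hconst p.1 p.2]
  · rintro ⟨x, hx, rfl⟩
    simp only [SetLike.mem_coe, LinearMap.mem_ker] at hx ⊢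
    funext s
    cases s with
    | inl c =>
      show (C.d1 (proj0L C.b1 w (diagL C.b1 w x))) c = 0
      have : proj0L (F := F) C.b1 w (diagL C.b1 w x) = x := by funext u; simp
      rw [this, hx]; rfl
    | inr p =>
      show diagL C.b1 w x p - diagL C.b1 w x (p.1, p.2 + 1) = 0
      simp

lemma tilde_range_d0 (C : BCC2 F) (w : ℕ) [NeZero w] :
    LinearMap.range (C.tilde w).d0 =
      Submodule.map (diagL C.b1 w) (LinearMap.range C.d0) := by
  show LinearMap.range ((diagL C.b1 w).comp C.d0) = _
  rw [LinearMap.range_comp]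

end Aux2
section Aux3
variable {F : Type} [Field F]

omit [Field F] in
lemma encard_eq_natCard {α : Type} (s : Set α) (hs : s.Finite) :
    s.encard = (Nat.card s : ℕ∞) := by
  have := hs.fintype
  rw [Set.encard_eq_coe_toFinset_card, Nat.card_eq_fintype_card, Set.toFinset_card]

lemma encard_diag_support {α : Type} [Fintype α] (w : ℕ) (x : α → F) :
    {p : α × Fin w | diagL α w x p ≠ 0}.encard = w * {u | x u ≠ 0}.encard := by
  rw [encard_eq_natCard _ (Set.toFinite _), encard_eq_natCard _ (Set.toFinite _)]
  have e : {p : α × Fin w | diagL α w x p ≠ 0} ≃ ({u | x u ≠ 0} × Fin w) :=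
    { toFun := fun p => (⟨p.1.1, p.2⟩, p.1.2)
      invFun := fun q => ⟨(q.1.1, q.2), q.1.2⟩
      left_inv := fun p => rfl
      right_inv := fun q => rfl }
  rw [Nat.card_congr e, Nat.card_prod, Nat.card_eq_fintype_card (α := Fin w),
    Fintype.card_fin]
  push_cast
  ring

omit [Field F] in
lemma sInf_mul_enat (w : ℕ) (hw : w ≠ 0) (S : Set ℕ∞) :
    sInf ((fun e => (w : ℕ∞) * e) '' S) = w * sInf S := by
  rcases S.eq_empty_or_nonempty with rfl | hS
  · rw [Set.image_empty, sInf_empty]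
    exact (ENat.mul_top (by exact_mod_cast hw)).symm
  · refine le_antisymm ?_ ?_
    · exact sInf_le (Set.mem_image_of_mem _ (csInf_mem hS))
    · refine le_sInf ?_
      rintro b ⟨s, hs, rfl⟩
      exact mul_le_mul_right (sInf_le hs) _

lemma tilde_cocycle_set (C : BCC2 F) (w : ℕ) [NeZero w] :
    {y : (C.tilde w).b1 → F | (C.tilde w).d1 y = 0 ∧ y ∉ LinearMap.range (C.tilde w).d0}
      = (diagL C.b1 w) '' {x | C.d1 x = 0 ∧ x ∉ LinearMap.range C.d0} := by
  ext y
  constructor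
  · rintro ⟨h1, h2⟩
    have : y ∈ LinearMap.ker (C.tilde w).d1 := h1
    rw [tilde_ker_d1] at this
    obtain ⟨x, hx, rfl⟩ := this
    refine ⟨x, ⟨hx, ?_⟩, rfl⟩
    intro hxr
    apply h2
    have : diagL C.b1 w x ∈ Submodule.map (diagL C.b1 w) (LinearMap.range C.d0) :=
      ⟨x, hxr, rfl⟩
    rw [← tilde_range_d0] at this
    exact this
  · rintro ⟨x, ⟨h1, h2⟩, rfl⟩
    constructor
    · have : diagL C.b1 w x ∈ LinearMap.ker (C.tilde w).d1 := by
        rw [tilde_ker_d1]; exact ⟨x, h1, rfl⟩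
      exact this
    · intro hy
      rw [tilde_range_d0] at hy
      obtain ⟨z, hz, hzz⟩ := hy
      exact h2 (by rwa [← diagL_inj hzz])

lemma tilde_dcosys1 (C : BCC2 F) (w : ℕ) [NeZero w] :
    (C.tilde w).dcosys1 = (w : ℕ∞) * C.dcosys1 := by
  unfold BCC2.dcosys1
  rw [← sInf_mul_enat w (NeZero.ne w), tilde_cocycle_set, ← Set.image_comp]
  erw [← Set.image_comp]
  congr 1
  apply Set.image_congr'
  intro x
  exact encard_diag_support w x

lemma finrank_map_diag {α : Type} {w : ℕ} [NeZero w] (p : Submodule F (α → F)) :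
    Module.finrank F (Submodule.map (diagL α w) p) = Module.finrank F p :=
  (LinearEquiv.finrank_eq (Submodule.equivMapOfInjective _ diagL_inj p)).symm

lemma tilde_h1dim (C : BCC2 F) (w : ℕ) [NeZero w] :
    (C.tilde w).h1dim = C.h1dim := by
  unfold BCC2.h1dim
  have h1 : Module.finrank F (LinearMap.ker (C.tilde w).d1)
      = Module.finrank F (LinearMap.ker C.d1) := by
    rw [tilde_ker_d1]; exact finrank_map_diag _
  have h2 : Module.finrank F (LinearMap.range (C.tilde w).d0)
      = Module.finrank F (LinearMap.range C.d0) := by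
    rw [tilde_range_d0]; exact finrank_map_diag _
  rw [h1, h2]

end Aux3
section Aux4
variable {F : Type} [Field F]

lemma finsum_tel {w : ℕ} [NeZero w] (y : Fin w → F) (j : Fin w) :
    (if j = 0 then ∑ k, y k else 0) +
      ((∑ k ∈ Finset.univ.filter (fun k : Fin w => k.val ≤ j.val), y k)
        - (∑ k ∈ Finset.univ.filter (fun k : Fin w => k.val ≤ (j - 1).val), y k))
      = y j := by
  obtain ⟨m, rfl⟩ := Nat.exists_eq_succ_of_ne_zero (NeZero.ne w)
  by_cases hj : j = 0
  · subst hj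
    have h0 : Finset.univ.filter (fun k : Fin (m + 1) => k.val ≤ (0 : Fin (m + 1)).val)
        = {0} := by
      ext k
      simp [Nat.le_zero, ← Fin.val_eq_zero_iff]
    have h2 : Finset.univ.filter
        (fun k : Fin (m + 1) => k.val ≤ ((0 : Fin (m + 1)) - 1).val) = Finset.univ := by
      have h1 : ((0 : Fin (m + 1)) - 1).val = m := by
        rw [zero_sub, Fin.coe_neg_one]
      ext k
      simp [h1, Fin.is_le k]
    rw [if_pos rfl, h0, Finset.sum_singleton, h2]
    ring
  · have hjv : j.val ≠ 0 := by
      exact fun h => hj (Fin.ext h)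
    have h1 : (j - 1).val = j.val - 1 := by
      rw [Fin.coe_sub_one, if_neg hj]
    have h2 : Finset.univ.filter (fun k : Fin (m + 1) => k.val ≤ j.val)
        = insert j (Finset.univ.filter (fun k : Fin (m + 1) => k.val ≤ j.val - 1)) := by
      ext k
      simp only [Finset.mem_filter, Finset.mem_univ, true_and, Finset.mem_insert]
      constructor
      · intro hk
        rcases eq_or_lt_of_le hk with h | h
        · exact Or.inl (Fin.ext h)
        · exact Or.inr (Nat.le_pred_of_lt h)
      · rintro (rfl | hk)
        · exact le_rfl
        · exact le_trans hk (Nat.sub_le _ _)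
    have h3 : j ∉ Finset.univ.filter (fun k : Fin (m + 1) => k.val ≤ j.val - 1) := by
      simp only [Finset.mem_filter, Finset.mem_univ, true_and]
      omega
    rw [if_neg hj, h1, h2, Finset.sum_insert h3]
    ring

lemma tilde_mulVec_d0T (C : BCC2 F) (w : ℕ) [NeZero w] (y : (C.tilde w).b1 → F) :
    (tmat (C.tilde w).d0)ᵀ.mulVec y
      = (tmat C.d0)ᵀ.mulVec (fun u => ∑ i : Fin w, y (u, i)) := by
  funext v
  show ∑ p : C.b1 × Fin w, tmat (C.tilde w).d0 p v * y p
    = ∑ u : C.b1, tmat C.d0 u v * ∑ i : Fin w, y (u, i)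
  rw [Fintype.sum_prod_type]
  refine Finset.sum_congr rfl fun u _ => ?_
  rw [Finset.mul_sum]
  rfl

end Aux4
section Aux5
variable {F : Type} [Field F]

lemma tilde_d1_entry_inl (C : BCC2 F) (w : ℕ) [NeZero w] (c : C.b2) (v : C.b1)
    (j : Fin w) :
    tmat (C.tilde w).d1 (Sum.inl c) (v, j) = if j = 0 then tmat C.d1 c v else 0 := by
  have h0 : tmat (C.tilde w).d1 (Sum.inl c) (v, j)
      = C.d1 (fun u => (Pi.single (v, j) (1 : F) : C.b1 × Fin w → F) (u, 0)) c := rfl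
  rw [h0]
  by_cases hj : j = 0
  · subst hj
    have : (fun u => (Pi.single (v, (0 : Fin w)) (1 : F) : C.b1 × Fin w → F) (u, 0))
        = Pi.single v (1 : F) := by
      funext u
      simp [Pi.single_apply, Prod.ext_iff]
    rw [this, if_pos rfl]
    rfl
  · have : (fun u => (Pi.single (v, j) (1 : F) : C.b1 × Fin w → F) (u, 0))
        = (0 : C.b1 → F) := by
      funext u
      simp only [Pi.single_apply, Prod.ext_iff]
      rw [if_neg]
      · rfl
      · rintro ⟨-, h⟩
        exact hj h.symm
    rw [this, map_zero, if_neg hj]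
    rfl

lemma tilde_d1_entry_inr (C : BCC2 F) (w : ℕ) [NeZero w] (p : C.b1 × Fin w) (v : C.b1)
    (j : Fin w) :
    tmat (C.tilde w).d1 (Sum.inr p) (v, j)
      = (Pi.single (v, j) (1 : F) : C.b1 × Fin w → F) p
        - (Pi.single (v, j) (1 : F) : C.b1 × Fin w → F) (p.1, p.2 + 1) := rfl

lemma tilde_mulVec_d1T (C : BCC2 F) (w : ℕ) [NeZero w] (y : (C.tilde w).b1 → F)
    (y2 : C.b2 → F) (hy2 : (tmat C.d1)ᵀ.mulVec y2 = fun v => ∑ i : Fin w, y (v, i)) :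
    (tmat (C.tilde w).d1)ᵀ.mulVec
      (Sum.elim y2 (fun p : C.b1 × Fin w =>
        ∑ k ∈ Finset.univ.filter (fun k : Fin w => k.val ≤ p.2.val), y (p.1, k))) = y := by
  set g : C.b1 × Fin w → F := fun p =>
    ∑ k ∈ Finset.univ.filter (fun k : Fin w => k.val ≤ p.2.val), y (p.1, k) with hg
  funext q
  obtain ⟨v, j⟩ := q
  show ∑ s : C.b2 ⊕ (C.b1 × Fin w),
      tmat (C.tilde w).d1 s (v, j) * Sum.elim y2 g s = y (v, j)
  rw [Fintype.sum_sum_type]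
  have e1 : ∑ c : C.b2, tmat (C.tilde w).d1 (Sum.inl c) (v, j) * Sum.elim y2 g (Sum.inl c)
      = if j = 0 then ∑ i : Fin w, y (v, i) else 0 := by
    simp only [tilde_d1_entry_inl, Sum.elim_inl]
    by_cases hj : j = 0
    · simp only [if_pos hj]
      have := congrFun hy2 v
      simpa [Matrix.mulVec, dotProduct] using this
    · simp [if_neg hj]
  have e2 : ∑ p : C.b1 × Fin w,
      tmat (C.tilde w).d1 (Sum.inr p) (v, j) * Sum.elim y2 g (Sum.inr p)
      = g (v, j) - g (v, j - 1) := by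
    simp only [tilde_d1_entry_inr, Sum.elim_inr, sub_mul, Finset.sum_sub_distrib]
    congr 1
    · rw [Finset.sum_congr rfl (fun p _ => by
        rw [Pi.single_apply, ite_mul, one_mul, zero_mul])]
      rw [Finset.sum_ite_eq' Finset.univ ((v, j) : C.b1 × Fin w) g,
        if_pos (Finset.mem_univ _)]
    · have hcond : ∀ p : C.b1 × Fin w,
          (((p.1, p.2 + 1) : C.b1 × Fin w) = (v, j)) = (p = (v, j - 1)) := by
        intro p
        simp only [Prod.ext_iff, eq_iff_iff]
        constructor
        · rintro ⟨h1, h2⟩; exact ⟨h1, by rw [← h2]; abel⟩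
        · rintro ⟨h1, h2⟩; exact ⟨h1, by rw [h2]; abel⟩
      have hstep : (∑ p : C.b1 × Fin w,
          (Pi.single (v, j) (1 : F) : C.b1 × Fin w → F) (p.1, p.2 + 1) * g p)
          = ∑ p : C.b1 × Fin w, (if p = ((v, j - 1) : C.b1 × Fin w) then g p else 0) := by
        refine Finset.sum_congr rfl fun p _ => ?_
        simp only [Pi.single_apply, hcond p, ite_mul, one_mul, zero_mul]
      rw [hstep, Finset.sum_ite_eq' Finset.univ ((v, j - 1) : C.b1 × Fin w) g,
        if_pos (Finset.mem_univ _)]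
  rw [e1, e2]
  exact finsum_tel (fun k => y (v, k)) j

end Aux5
section Aux6
variable {F : Type} [Field F]

lemma tilde_dsys1 (C : BCC2 F) (w : ℕ) [NeZero w] : C.dsys1 ≤ (C.tilde w).dsys1 := by
  unfold BCC2.dsys1
  refine le_sInf ?_
  rintro b ⟨y, ⟨hy1, hy2⟩, rfl⟩
  set x : C.b1 → F := fun u => ∑ i : Fin w, y (u, i) with hx
  have hx1 : (tmat C.d0)ᵀ.mulVec x = 0 := by
    rw [← tilde_mulVec_d0T]; exact hy1
  have hx2 : x ∉ Set.range fun y2 : C.b2 → F => (tmat C.d1)ᵀ.mulVec y2 := by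
    rintro ⟨y2, hy2'⟩
    exact hy2 ⟨Sum.elim y2 (fun p : C.b1 × Fin w =>
      ∑ k ∈ Finset.univ.filter (fun k : Fin w => k.val ≤ p.2.val), y (p.1, k)),
      tilde_mulVec_d1T C w y y2 hy2'⟩
  refine le_trans (sInf_le ⟨x, ⟨hx1, hx2⟩, rfl⟩) ?_
  have hsub : {u | x u ≠ 0} ⊆ Prod.fst '' {p : C.b1 × Fin w | y p ≠ 0} := by
    intro u hu
    by_contra h
    apply hu
    have hz : ∀ i : Fin w, y (u, i) = 0 := by
      intro i
      by_contra hyi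
      exact h ⟨(u, i), hyi, rfl⟩
    show (∑ i : Fin w, y (u, i)) = 0
    exact Finset.sum_eq_zero fun i _ => hz i
  exact le_trans (Set.encard_le_encard hsub) (Set.encard_image_le _ _)

omit [Field F] in
lemma natCard_subset_le {α : Type} [Fintype α] {s t : Set α} (h : s ⊆ t) :
    Nat.card s ≤ Nat.card t := by
  rw [Nat.card_coe_set_eq, Nat.card_coe_set_eq]
  exact Set.ncard_le_ncard h t.toFinite

lemma natCard_diag_support {α : Type} [Fintype α] (w : ℕ) (x : α → F) :
    Nat.card {p : α × Fin w | x p.1 ≠ 0} = Nat.card {u | x u ≠ 0} * w := by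
  have e : {p : α × Fin w | x p.1 ≠ 0} ≃ ({u | x u ≠ 0} × Fin w) :=
    { toFun := fun p => (⟨p.1.1, p.2⟩, p.1.2)
      invFun := fun q => ⟨(q.1.1, q.2), q.1.2⟩
      left_inv := fun p => rfl
      right_inv := fun q => rfl }
  rw [Nat.card_congr e, Nat.card_prod, Nat.card_eq_fintype_card (α := Fin w),
    Fintype.card_fin]

lemma col_le_mapLoc {α β : Type} [Fintype α] [Fintype β] [DecidableEq α]
    (L : (α → F) →ₗ[F] (β → F)) (a : α) :
    Nat.card {b : β | L (Pi.single a 1) b ≠ 0} ≤ mapLoc L := by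
  unfold mapLoc
  exact le_sup_of_le_left (Finset.le_sup (f := fun a : α => Nat.card {b : β | L (Pi.single a 1) b ≠ 0}) (Finset.mem_univ a))

lemma row_le_mapLoc {α β : Type} [Fintype α] [Fintype β] [DecidableEq α]
    (L : (α → F) →ₗ[F] (β → F)) (b : β) :
    Nat.card {a : α | L (Pi.single a 1) b ≠ 0} ≤ mapLoc L := by
  unfold mapLoc
  exact le_sup_of_le_right (Finset.le_sup (f := fun b : β => Nat.card {a : α | L (Pi.single a 1) b ≠ 0}) (Finset.mem_univ b))

lemma tilde_mapLoc_d0 (C : BCC2 F) (w : ℕ) [NeZero w] :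
    mapLoc (C.tilde w).d0 ≤ w * mapLoc C.d0 := by
  apply max_le
  · apply Finset.sup_le
    intro v _
    show Nat.card {p : C.b1 × Fin w | C.d0 (Pi.single v 1) p.1 ≠ 0} ≤ w * mapLoc C.d0
    rw [natCard_diag_support, mul_comm]
    apply Nat.mul_le_mul_left
    exact col_le_mapLoc C.d0 v
  · apply Finset.sup_le
    rintro ⟨u, i⟩ _
    show Nat.card {v : C.b0 | C.d0 (Pi.single v 1) u ≠ 0} ≤ w * mapLoc C.d0
    calc Nat.card {v : C.b0 | C.d0 (Pi.single v 1) u ≠ 0}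
        ≤ mapLoc C.d0 := row_le_mapLoc C.d0 u
      _ ≤ w * mapLoc C.d0 := Nat.le_mul_of_pos_left _ (Nat.pos_of_ne_zero (NeZero.ne w))

lemma tilde_mapLoc_d1 (C : BCC2 F) (w : ℕ) [NeZero w] :
    mapLoc (C.tilde w).d1 ≤ mapLoc C.d1 + 2 := by
  apply max_le
  · -- columns, indexed by (v, j)
    apply Finset.sup_le
    rintro ⟨v, j⟩ _
    have hsub : {s : C.b2 ⊕ (C.b1 × Fin w) | tmat (C.tilde w).d1 s (v, j) ≠ 0}
        ⊆ (Sum.inl '' {c : C.b2 | tmat C.d1 c v ≠ 0})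
          ∪ {Sum.inr (v, j), Sum.inr (v, j - 1)} := by
      rintro (c | p) hs
      · left
        refine ⟨c, ?_, rfl⟩
        rw [Set.mem_setOf_eq, tilde_d1_entry_inl] at hs
        by_cases hj : j = 0
        · rwa [if_pos hj] at hs
        · rw [if_neg hj] at hs; exact absurd rfl hs
      · right
        rw [Set.mem_setOf_eq, tilde_d1_entry_inr] at hs
        rcases eq_or_ne p ((v, j) : C.b1 × Fin w) with rfl | hp
        · exact Set.mem_insert _ _
        · rcases eq_or_ne p ((v, j - 1) : C.b1 × Fin w) with rfl | hp'
          · exact Set.mem_insert_of_mem _ (Set.mem_singleton _)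
          · exfalso
            apply hs
            rw [Pi.single_apply, if_neg hp, Pi.single_apply, if_neg, sub_zero]
            intro hcon
            apply hp'
            have : p.2 + 1 = j := (Prod.ext_iff.mp hcon).2
            exact Prod.ext (Prod.ext_iff.mp hcon).1 (by rw [← this]; abel)
    calc Nat.card {s : C.b2 ⊕ (C.b1 × Fin w) | tmat (C.tilde w).d1 s (v, j) ≠ 0}
        ≤ Nat.card ((Sum.inl '' {c : C.b2 | tmat C.d1 c v ≠ 0})
          ∪ ({Sum.inr (v, j), Sum.inr (v, j - 1)} :
            Set (C.b2 ⊕ (C.b1 × Fin w))) : Set _) := natCard_subset_le hsub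
      _ ≤ mapLoc C.d1 + 2 := by
          rw [Nat.card_coe_set_eq]
          refine le_trans (Set.ncard_union_le _ _) ?_
          have h1 : ((Sum.inl '' {c : C.b2 | tmat C.d1 c v ≠ 0}) :
              Set (C.b2 ⊕ (C.b1 × Fin w))).ncard ≤ mapLoc C.d1 := by
            rw [Set.ncard_image_of_injective _ Sum.inl_injective,
              ← Nat.card_coe_set_eq]
            exact col_le_mapLoc C.d1 v
          have h2 : ({Sum.inr (v, j), Sum.inr (v, j - 1)} :
              Set (C.b2 ⊕ (C.b1 × Fin w))).ncard ≤ 2 :=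
            le_trans (Set.ncard_insert_le _ _) (by simp)
          omega
  · -- rows
    apply Finset.sup_le
    rintro (c | p) _
    · have hsub : {a : C.b1 × Fin w | tmat (C.tilde w).d1 (Sum.inl c) a ≠ 0}
          ⊆ (fun v : C.b1 => ((v, (0 : Fin w)) : C.b1 × Fin w)) ''
            {v : C.b1 | tmat C.d1 c v ≠ 0} := by
        rintro ⟨v, j⟩ hs
        rw [Set.mem_setOf_eq, tilde_d1_entry_inl] at hs
        by_cases hj : j = 0
        · subst hj
          exact ⟨v, by rwa [if_pos rfl] at hs, rfl⟩
        · rw [if_neg hj] at hs; exact absurd rfl hs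
      refine le_trans (natCard_subset_le hsub) ?_
      erw [Nat.card_coe_set_eq,
        Set.ncard_image_of_injective _ (fun a b hab => (Prod.ext_iff.mp hab).1),
        ← Nat.card_coe_set_eq]
      refine le_trans ?_ (Nat.le_add_right _ 2)
      exact row_le_mapLoc C.d1 c
    · have hsub : {a : C.b1 × Fin w | tmat (C.tilde w).d1 (Sum.inr p) a ≠ 0}
          ⊆ {p, (p.1, p.2 + 1)} := by
        rintro ⟨v, j⟩ hs
        rw [Set.mem_setOf_eq, tilde_d1_entry_inr] at hs
        rcases eq_or_ne p ((v, j) : C.b1 × Fin w) with rfl | hp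
        · exact Set.mem_insert _ _
        · rcases eq_or_ne ((p.1, p.2 + 1) : C.b1 × Fin w) ((v, j) : C.b1 × Fin w)
            with hp' | hp'
          · exact Set.mem_insert_of_mem _ (by rw [hp']; exact Set.mem_singleton _)
          · exfalso
            apply hs
            rw [Pi.single_apply, if_neg hp, Pi.single_apply, if_neg, sub_zero]
            exact fun hcon => hp' (by rw [← hcon])
      refine le_trans (natCard_subset_le hsub) ?_
      have h2 : Nat.card ({p, (p.1, p.2 + 1)} : Set (C.b1 × Fin w)) ≤ 2 := by
        rw [Nat.card_coe_set_eq]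
        exact le_trans (Set.ncard_insert_le _ _) (by simp)
      exact le_trans h2 (Nat.le_add_left _ _)

lemma tilde_loc (C : BCC2 F) (w : ℕ) [NeZero w] :
    (C.tilde w).loc ≤ max (w * C.loc) (C.loc + 2) := by
  unfold BCC2.loc
  apply max_le
  · refine le_trans (tilde_mapLoc_d0 C w) (le_trans ?_ (le_max_left _ _))
    exact Nat.mul_le_mul_left w (le_max_left _ _)
  · refine le_trans (tilde_mapLoc_d1 C w) (le_trans ?_ (le_max_right _ _))
    exact Nat.add_le_add_right (le_max_right _ _) 2

end Aux6
section Aux7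
variable {F : Type} [Field F]

noncomputable def prodML {r : ℕ} (Ct : Fin r → BCC2 F) (p : ∀ h, (Ct h).b1) :
    MultilinearMap F (fun h => (Ct h).b1 → F) F :=
  (MultilinearMap.mkPiAlgebra F (Fin r) F).compLinearMap fun h => LinearMap.proj (p h)

@[simp] lemma prodML_apply {r : ℕ} (Ct : Fin r → BCC2 F) (p : ∀ h, (Ct h).b1)
    (y : ∀ h, (Ct h).b1 → F) : prodML Ct p y = ∏ h, y h (p h) := by
  simp [prodML]

lemma pi_single_decomp {α : Type} [Fintype α] [DecidableEq α] (x : α → F) :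
    x = ∑ u, x u • (Pi.single u 1 : α → F) := by
  funext v
  rw [Finset.sum_apply]
  simp only [Pi.smul_apply, Pi.single_apply, smul_eq_mul, mul_ite, mul_one, mul_zero]
  rw [Finset.sum_ite_eq Finset.univ v x, if_pos (Finset.mem_univ v)]

lemma prod_single_eq {r : ℕ} {β : Fin r → Type} [∀ h, DecidableEq (β h)]
    (pp q : ∀ h, β h) :
    (∏ h, (Pi.single (pp h) (1 : F) : β h → F) (q h))
      = if ∀ h, q h = pp h then 1 else 0 := by
  by_cases hall : ∀ h, q h = pp h
  · rw [if_pos hall]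
    apply Finset.prod_eq_one
    intro h _
    rw [hall h, Pi.single_eq_same]
  · rw [if_neg hall]
    push_neg at hall
    obtain ⟨h, hh⟩ := hall
    exact Finset.prod_eq_zero (Finset.mem_univ h) (by rw [Pi.single_apply, if_neg hh])

end Aux7
/-- locality reduction; Lemma 3.31.  Given 2-dimensional based cochain
complexes `C⁽ʰ⁾` over `F_q` and a multilinear form `ζ` on their 1-cochains of locality
`w^ζ ≥ 1` that is coboundary-invariant on some `H' = (H'_h ⊆ H^1(C⁽ʰ⁾))` (represented by
intermediate subspaces `W h`), there exist 2-dimensional based complexes `C̃⁽ʰ⁾` and a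
multilinear form `ζ̃` coboundary-invariant on some `H̃'` with: `dim (C̃⁽ʰ⁾)^1 = w^ζ ·
dim (C⁽ʰ⁾)^1`; `dim H^1(C̃⁽ʰ⁾) = dim H^1(C⁽ʰ⁾)`; `d^1(C̃⁽ʰ⁾) = w^ζ · d^1(C⁽ʰ⁾)`;
`d_1(C̃⁽ʰ⁾) ≥ d_1(C⁽ʰ⁾)`; locality of `C̃⁽ʰ⁾` at most `max {w^ζ·w^{C⁽ʰ⁾}, w^{C⁽ʰ⁾}+2}`;
`ζ̃` has locality 1; and `subrank(ζ̃_{H̃'}) = subrank(ζ_{H'})`. -/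
theorem stmt19 (F : Type) [Field F] [Fintype F] (r : ℕ) (hr : 2 ≤ r)
    (Cs : Fin r → BCC2 F)
    (ζ : MultilinearMap F (fun h => (Cs h).b1 → F) F)
    (W : ∀ h, Submodule F ((Cs h).b1 → F))
    (hBW : ∀ h, LinearMap.range (Cs h).d0 ≤ W h)
    (hWZ : ∀ h, W h ≤ LinearMap.ker (Cs h).d1)
    (hinv : CobInv Cs ζ W) (hloc : 1 ≤ zloc Cs ζ) :
    ∃ (Ct : Fin r → BCC2 F) (ζt : MultilinearMap F (fun h => (Ct h).b1 → F) F)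
      (Wt : ∀ h, Submodule F ((Ct h).b1 → F)),
      (∀ h, LinearMap.range (Ct h).d0 ≤ Wt h) ∧
      (∀ h, Wt h ≤ LinearMap.ker (Ct h).d1) ∧
      CobInv Ct ζt Wt ∧
      (∀ h, Fintype.card (Ct h).b1 = zloc Cs ζ * Fintype.card (Cs h).b1) ∧
      (∀ h, (Ct h).h1dim = (Cs h).h1dim) ∧
      (∀ h, (Ct h).dcosys1 = (zloc Cs ζ : ℕ∞) * (Cs h).dcosys1) ∧
      (∀ h, (Cs h).dsys1 ≤ (Ct h).dsys1) ∧
      (∀ h, (Ct h).loc ≤ max (zloc Cs ζ * (Cs h).loc) ((Cs h).loc + 2)) ∧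
      zloc Ct ζt = 1 ∧
      (∀ s : ℕ, SubrankGE Cs ζ W s (by omega) ↔ SubrankGE Ct ζt Wt s (by omega)) := by
  classical
  have hr0 : 0 < r := by omega
  set w := zloc Cs ζ with hw
  haveI : NeZero w := ⟨by omega⟩
  set Ct : Fin r → BCC2 F := fun h => (Cs h).tilde w with hCt
  -- the filter used to index nonzero tuples
  set S : Fin r → (∀ h', (Cs h').b1) → Finset (∀ h', (Cs h').b1) := fun h uu =>
    Finset.univ.filter (fun uu' : ∀ h', (Cs h').b1 =>
      uu' h = uu h ∧ ζ (fun h' => Pi.single (uu' h') 1) ≠ 0) with hS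
  have hScard : ∀ (h : Fin r) (uu : ∀ h', (Cs h').b1), (S h uu).card ≤ w := by
    intro h uu
    have h1 : (S h uu).card = Nat.card {uu' : ∀ h', (Cs h').b1 //
        uu' h = uu h ∧ ζ (fun h' => Pi.single (uu' h') 1) ≠ 0} := by
      rw [hS, Nat.card_eq_fintype_card, Fintype.card_subtype]
    rw [h1, hw]
    refine le_trans (Finset.le_sup (f := fun u : (Cs h).b1 => Nat.card
      {uu' : ∀ h', (Cs h').b1 // uu' h = u ∧ ζ (fun h' => Pi.single (uu' h') 1) ≠ 0})
      (Finset.mem_univ (uu h))) ?_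
    exact Finset.le_sup (f := fun h : Fin r => Finset.univ.sup
      fun u : (Cs h).b1 => Nat.card {uu' : ∀ h', (Cs h').b1 //
        uu' h = u ∧ ζ (fun h' => Pi.single (uu' h') 1) ≠ 0}) (Finset.mem_univ h)
  set Φ : ∀ _ : Fin r, (∀ h', (Cs h').b1) → Fin w := fun h uu =>
    ⟨(List.idxOf uu (S h uu).toList) % w,
      Nat.mod_lt _ (Nat.pos_of_ne_zero (NeZero.ne w))⟩ with hΦ
  have hΦinj : ∀ (h : Fin r) (uu uu' : ∀ h', (Cs h').b1), uu h = uu' h →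
      ζ (fun h' => Pi.single (uu h') 1) ≠ 0 → ζ (fun h' => Pi.single (uu' h') 1) ≠ 0 →
      Φ h uu = Φ h uu' → uu = uu' := by
    intro h uu uu' huu hz hz' hp
    have hSS : S h uu = S h uu' := by rw [hS]; simp only [huu]
    have hm : uu ∈ (S h uu).toList := by
      rw [Finset.mem_toList, hS, Finset.mem_filter]
      exact ⟨Finset.mem_univ _, rfl, hz⟩
    have hm' : uu' ∈ (S h uu).toList := by
      rw [Finset.mem_toList, hS, Finset.mem_filter]
      exact ⟨Finset.mem_univ _, huu.symm, hz'⟩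
    have hlen : (S h uu).toList.length ≤ w := by
      rw [Finset.length_toList]; exact hScard h uu
    have hi : List.idxOf uu (S h uu).toList < w :=
      lt_of_lt_of_le (List.idxOf_lt_length_iff.mpr hm) hlen
    have hi' : List.idxOf uu' (S h uu).toList < w :=
      lt_of_lt_of_le (List.idxOf_lt_length_iff.mpr hm') hlen
    have hval : List.idxOf uu (S h uu).toList = List.idxOf uu' (S h uu).toList := by
      have := congrArg Fin.val hp
      rw [hΦ] at this
      simpa [← hSS, Nat.mod_eq_of_lt hi, Nat.mod_eq_of_lt hi'] using this
    exact List.idxOf_inj hm |>.mp hval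
  -- the new multilinear form
  set ζt : MultilinearMap F (fun h => (Ct h).b1 → F) F :=
    ∑ uu : ∀ h', (Cs h').b1,
      if ζ (fun h' => Pi.single (uu h') 1) = 0 then 0
      else ζ (fun h' => Pi.single (uu h') 1) •
        prodML Ct (fun h' => ((uu h', Φ h' uu) : (Ct h').b1)) with hζt
  set Wt : ∀ h, Submodule F ((Ct h).b1 → F) := fun h =>
    Submodule.map (diagL (Cs h).b1 w) (W h) with hWt
  -- evaluation on diagonal elements
  have hdiagEval : ∀ x : ∀ h, (Cs h).b1 → F,
      ζt (fun h => diagL (Cs h).b1 w (x h)) = ζ x := by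
    intro x
    erw [hζt, MultilinearMap.sum_apply]
    have hx : ζ x = ∑ uu : ∀ h', (Cs h').b1,
        (∏ h', x h' (uu h')) • ζ (fun h' => Pi.single (uu h') 1) := by
      conv_lhs => rw [show x = fun h' => ∑ u : (Cs h').b1, x h' u • (Pi.single u 1 : (Cs h').b1 → F) from
        funext fun h' => pi_single_decomp (x h')]
      rw [MultilinearMap.map_sum]
      exact Finset.sum_congr rfl fun uu _ => MultilinearMap.map_smul_univ ζ _ _
    rw [hx]
    refine Finset.sum_congr rfl fun uu _ => ?_
    by_cases hζ0 : ζ (fun h' => Pi.single (uu h') 1) = 0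
    · rw [if_pos hζ0, hζ0]
      simp; rfl
    · rw [if_neg hζ0]
      simp only [MultilinearMap.smul_apply, prodML_apply, smul_eq_mul]
      rw [mul_comm]
      congr 1
  -- evaluation on basis elements
  have hbasisEval : ∀ pp : ∀ h, (Ct h).b1,
      ζt (fun h => Pi.single (pp h) 1) =
        ∑ uu : ∀ h', (Cs h').b1,
          if ζ (fun h' => Pi.single (uu h') 1) = 0 then 0
          else if ∀ h', (((uu h', Φ h' uu) : (Ct h').b1)) = pp h'
            then ζ (fun h' => Pi.single (uu h') 1) else 0 := by
    intro pp
    rw [hζt, MultilinearMap.sum_apply]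
    refine Finset.sum_congr rfl fun uu _ => ?_
    by_cases hζ0 : ζ (fun h' => Pi.single (uu h') 1) = 0
    · rw [if_pos hζ0, if_pos hζ0]
      rfl
    · rw [if_neg hζ0, if_neg hζ0]
      simp only [MultilinearMap.smul_apply, prodML_apply, smul_eq_mul]
      erw [prodML_apply, prod_single_eq (F := F) (β := fun h => (Ct h).b1) pp
        (fun h' => ((uu h', Φ h' uu) : (Ct h').b1))]
      rw [mul_ite, mul_one, mul_zero]; congr 1
  -- characterization of nonzero basis evaluations
  have hchar : ∀ pp : ∀ h, (Ct h).b1, ζt (fun h => Pi.single (pp h) 1) ≠ 0 →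
      ∃ uu : ∀ h', (Cs h').b1, ζ (fun h' => Pi.single (uu h') 1) ≠ 0 ∧
        ∀ h', pp h' = ((uu h', Φ h' uu) : (Ct h').b1) := by
    intro pp hne
    rw [hbasisEval] at hne
    obtain ⟨uu, -, hterm⟩ := Finset.exists_ne_zero_of_sum_ne_zero hne
    by_cases hζ0 : ζ (fun h' => Pi.single (uu h') 1) = 0
    · rw [if_pos hζ0] at hterm
      exact absurd rfl hterm
    · rw [if_neg hζ0] at hterm
      by_cases hall : ∀ h', (((uu h', Φ h' uu) : (Ct h').b1)) = pp h'
      · exact ⟨uu, hζ0, fun h' => (hall h').symm⟩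
      · rw [if_neg hall] at hterm
        exact absurd rfl hterm
  -- value of ζt at the canonical basis tuple of a nonzero ζ-tuple
  have hval : ∀ uu₀ : ∀ h', (Cs h').b1, ζ (fun h' => Pi.single (uu₀ h') 1) ≠ 0 →
      ζt (fun h => Pi.single (((uu₀ h, Φ h uu₀) : (Ct h).b1)) 1)
        = ζ (fun h' => Pi.single (uu₀ h') 1) := by
    intro uu₀ hζ₀
    erw [hbasisEval]
    rw [Finset.sum_eq_single uu₀]
    · rw [if_neg hζ₀, if_pos (fun h' => rfl)]
    · intro uu _ hne
      by_cases hζ0 : ζ (fun h' => Pi.single (uu h') 1) = 0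
      · rw [if_pos hζ0]
      · rw [if_neg hζ0]
        rw [if_neg]
        intro hall
        apply hne
        funext h'
        have := congrArg Prod.fst (hall h')
        exact this
    · intro habs
      exact absurd (Finset.mem_univ _) habs
  -- there is a nonzero tuple
  obtain ⟨uu₀, hζ₀⟩ : ∃ uu : ∀ h', (Cs h').b1,
      ζ (fun h' => Pi.single (uu h') 1) ≠ 0 := by
    by_contra hnone
    push_neg at hnone
    have hz : zloc Cs ζ = 0 := by
      have : zloc Cs ζ ≤ 0 := by
        unfold zloc
        apply Finset.sup_le
        intro h _
        apply Finset.sup_le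
        intro u _
        have : IsEmpty {uu : ∀ h', (Cs h').b1 //
            uu h = u ∧ ζ (fun h' => Pi.single (uu h') 1) ≠ 0} := by
          constructor
          rintro ⟨uu, -, hne⟩
          exact hne (hnone uu)
        exact le_of_eq Nat.card_of_isEmpty
      omega
    rw [← hw] at hz
    omega
  refine ⟨Ct, ζt, Wt, ?_, ?_, ?_, ?_, ?_, ?_, ?_, ?_, ?_, ?_⟩
  · -- range d0 ≤ Wt
    intro h
    show LinearMap.range ((Cs h).tilde w).d0 ≤ Wt h
    rw [tilde_range_d0, hWt]
    exact Submodule.map_mono (hBW h)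
  · -- Wt ≤ ker d1
    intro h
    show Wt h ≤ LinearMap.ker ((Cs h).tilde w).d1
    rw [tilde_ker_d1, hWt]
    exact Submodule.map_mono (hWZ h)
  · -- coboundary invariance
    intro z b hz hb
    have hz' : ∀ h, ∃ z' ∈ W h, diagL (Cs h).b1 w z' = z h := fun h =>
      Submodule.mem_map.mp (hz h)
    choose z' hz'W hz'eq using hz'
    have hb' : ∀ h, ∃ b' ∈ LinearMap.range (Cs h).d0, diagL (Cs h).b1 w b' = b h := by
      intro h
      have := hb h
      rw [show LinearMap.range (Ct h).d0 = Submodule.map (diagL (Cs h).b1 w)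
        (LinearMap.range (Cs h).d0) from tilde_range_d0 (Cs h) w] at this
      exact Submodule.mem_map.mp this
    choose b' hb'R hb'eq using hb'
    have h1 : (fun h => z h + b h) = fun h => diagL (Cs h).b1 w (z' h + b' h) := by
      funext h
      rw [map_add, hz'eq, hb'eq]; rfl
    have h2 : z = fun h => diagL (Cs h).b1 w (z' h) := by
      funext h
      rw [hz'eq]
    rw [h1, h2, hdiagEval, hdiagEval]
    exact hinv z' b' hz'W hb'R
  · -- cardinality
    intro h
    have : Fintype.card (Ct h).b1 = Fintype.card ((Cs h).b1 × Fin w) :=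
      Fintype.card_congr (Equiv.refl _)
    rw [this, Fintype.card_prod, Fintype.card_fin, mul_comm]
  · -- h1dim
    intro h
    exact tilde_h1dim (Cs h) w
  · -- dcosys1
    intro h
    exact tilde_dcosys1 (Cs h) w
  · -- dsys1
    intro h
    exact tilde_dsys1 (Cs h) w
  · -- locality
    intro h
    exact tilde_loc (Cs h) w
  · -- zloc ζt = 1
    refine le_antisymm ?_ ?_
    · unfold zloc
      apply Finset.sup_le
      intro h _
      apply Finset.sup_le
      intro u _
      have hsub : Subsingleton {pp : ∀ h', (Ct h').b1 //
          pp h = u ∧ ζt (fun h' => Pi.single (pp h') 1) ≠ 0} := by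
        constructor
        rintro ⟨pp1, hp1, hn1⟩ ⟨pp2, hp2, hn2⟩
        obtain ⟨uu1, hz1, he1⟩ := hchar pp1 hn1
        obtain ⟨uu2, hz2, he2⟩ := hchar pp2 hn2
        have hu12 : uu1 = uu2 := by
          have e1 : ((uu1 h, Φ h uu1) : (Ct h).b1) = u := by rw [← he1 h, hp1]
          have e2 : ((uu2 h, Φ h uu2) : (Ct h).b1) = u := by rw [← he2 h, hp2]
          have e3 : ((uu1 h, Φ h uu1) : (Cs h).b1 × Fin w)
              = ((uu2 h, Φ h uu2) : (Cs h).b1 × Fin w) := by rw [e1, ← e2]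
          have efst : uu1 h = uu2 h := congrArg Prod.fst e3
          have esnd : Φ h uu1 = Φ h uu2 := congrArg Prod.snd e3
          exact hΦinj h uu1 uu2 efst hz1 hz2 esnd
        have : pp1 = pp2 := by
          funext h'
          rw [he1 h', he2 h', hu12]
        exact Subtype.ext this
      have : Nat.card {pp : ∀ h', (Ct h').b1 //
          pp h = u ∧ ζt (fun h' => Pi.single (pp h') 1) ≠ 0} ≤ 1 := by
        rcases isEmpty_or_nonempty {pp : ∀ h', (Ct h').b1 //
            pp h = u ∧ ζt (fun h' => Pi.single (pp h') 1) ≠ 0} with he | hne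
        · rw [Nat.card_of_isEmpty]
          omega
        · haveI : Unique {pp : ∀ h', (Ct h').b1 //
              pp h = u ∧ ζt (fun h' => Pi.single (pp h') 1) ≠ 0} :=
            uniqueOfSubsingleton (Classical.arbitrary _)
          exact le_of_eq Nat.card_unique
      exact this
    · set pp₀ : ∀ h, (Ct h).b1 := fun h => ((uu₀ h, Φ h uu₀) : (Ct h).b1) with hpp₀
      have hppne : ζt (fun h' => Pi.single (pp₀ h') 1) ≠ 0 := by
        rw [hpp₀, hval uu₀ hζ₀]
        exact hζ₀
      have hmem : Nonempty {pp : ∀ h', (Ct h').b1 //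
          pp (⟨0, hr0⟩ : Fin r) = pp₀ (⟨0, hr0⟩ : Fin r) ∧
          ζt (fun h' => Pi.single (pp h') 1) ≠ 0} := ⟨⟨pp₀, rfl, hppne⟩⟩
      have hpos : 1 ≤ Nat.card {pp : ∀ h', (Ct h').b1 //
          pp (⟨0, hr0⟩ : Fin r) = pp₀ (⟨0, hr0⟩ : Fin r) ∧
          ζt (fun h' => Pi.single (pp h') 1) ≠ 0} := Nat.card_pos
      refine le_trans hpos ?_
      unfold zloc
      refine le_trans (Finset.le_sup (f := fun u : (Ct (⟨0, hr0⟩ : Fin r)).b1 =>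
        Nat.card {pp : ∀ h', (Ct h').b1 // pp (⟨0, hr0⟩ : Fin r) = u ∧
          ζt (fun h' => Pi.single (pp h') 1) ≠ 0})
        (Finset.mem_univ (pp₀ (⟨0, hr0⟩ : Fin r)))) ?_
      exact Finset.le_sup (f := fun h : Fin r => Finset.univ.sup
        fun u : (Ct h).b1 => Nat.card {pp : ∀ h', (Ct h').b1 // pp h = u ∧
          ζt (fun h' => Pi.single (pp h') 1) ≠ 0}) (Finset.mem_univ (⟨0, hr0⟩ : Fin r))
  · -- subrank
    intro s
    constructor
    · rintro ⟨v, hvW, hval'⟩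
      refine ⟨fun h j => diagL (Cs h).b1 w (v h j), ?_, ?_⟩
      · intro h j
        exact Submodule.mem_map_of_mem (hvW h j)
      · intro jj
        rw [hdiagEval]
        exact hval' jj
    · rintro ⟨v, hvW, hval'⟩
      have hv' : ∀ h j, ∃ v' ∈ W h, diagL (Cs h).b1 w v' = v h j := fun h j =>
        Submodule.mem_map.mp (hvW h j)
      choose v' hv'W hv'eq using hv'
      refine ⟨v', hv'W, ?_⟩
      intro jj
      have : (fun h => v h (jj h)) = fun h => diagL (Cs h).b1 w (v' h (jj h)) := by
        funext h
        rw [hv'eq]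
      rw [← hdiagEval, ← this]
      exact hval' jj
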